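/- Let (X, ‖·‖) be a Banach space and T : X → X an enriched (b,φ)-contraction: there exist b ∈ [0,∞) and a comparison function φ : ℝ₊ → ℝ₊ (nondecreasing with φⁿ(t) → 0 for all t ≥ 0) such that ‖b(x-y)+Tx-Ty‖ ≤ (b+1)φ(‖x-y‖) for all x,y ∈ X. Then T has a unique fixed point p, and there exists λ ∈ (0,1] such that the iteration x_{n+1} = (1-λ)x_n + λTx_n converges strongly to p for any x₀ ∈ X. -/
import Mathlib


theorem enriched_phi_contraction
    {X : Type*} [NormedAddCommGroup X] [NormedSpace ℝ X] [CompleteSpace X]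
    (T : X → X) (b : ℝ) (hb : 0 ≤ b) (φ : ℝ → ℝ)
    (hφ0 : ∀ t : ℝ, 0 ≤ t → 0 ≤ φ t)
    (hφmono : ∀ s t : ℝ, 0 ≤ s → s ≤ t → φ s ≤ φ t)
    (hφiter : ∀ t : ℝ, 0 ≤ t → Filter.Tendsto (fun n => φ^[n] t) Filter.atTop (nhds 0))
    (hT : ∀ x y : X, ‖b • (x - y) + T x - T y‖ ≤ (b + 1) * φ ‖x - y‖) :
    ∃ p : X, T p = p ∧ (∀ q : X, T q = q → q = p) ∧
      ∃ lam ∈ Set.Ioc (0:ℝ) 1, ∀ x : ℕ → X,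
        (∀ n, x (n + 1) = (1 - lam) • x n + lam • T (x n)) →
        Filter.Tendsto x Filter.atTop (nhds p) := by
  have hb1 : (0:ℝ) < b + 1 := by linarith
  set lam : ℝ := (b + 1)⁻¹ with hlamdef
  have hlam0 : 0 < lam := inv_pos.mpr hb1
  have hlam1 : lam ≤ 1 := by
    rw [hlamdef]
    rw [inv_le_one_iff₀]
    right; linarith
  have hlamb : lam * (b + 1) = 1 := inv_mul_cancel₀ hb1.ne'
  have hkey : lam * b = 1 - lam := by linear_combination hlamb
  set S : X → X := fun x => (1 - lam) • x + lam • T x with hS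
  -- basic facts about φ
  have hiter_nonneg : ∀ t : ℝ, 0 ≤ t → ∀ n : ℕ, 0 ≤ φ^[n] t := by
    intro t ht n
    induction n with
    | zero => simpa using ht
    | succ n ih => rw [Function.iterate_succ_apply']; exact hφ0 _ ih
  have hφlt : ∀ t : ℝ, 0 < t → φ t < t := by
    intro t ht
    by_contra h
    push_neg at h
    have hall : ∀ n : ℕ, t ≤ φ^[n+1] t := by
      intro n
      induction n with
      | zero => simpa using h
      | succ n ih =>
        rw [Function.iterate_succ_apply']
        calc t ≤ φ t := h
        _ ≤ φ (φ^[n+1] t) := hφmono _ _ ht.le ih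
    have := ge_of_tendsto ((hφiter t ht.le).comp (Filter.tendsto_add_atTop_nat 1))
      (Filter.Eventually.of_forall (fun n => hall n))
    linarith
  have hφ00 : φ 0 ≤ 0 := by
    have hall : ∀ n : ℕ, φ 0 ≤ φ^[n+1] 0 := by
      intro n
      rw [Function.iterate_succ_apply']
      exact hφmono _ _ le_rfl (hiter_nonneg 0 le_rfl n)
    exact ge_of_tendsto ((hφiter 0 le_rfl).comp (Filter.tendsto_add_atTop_nat 1))
      (Filter.Eventually.of_forall hall)
  have hφle : ∀ t : ℝ, 0 ≤ t → φ t ≤ t := by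
    intro t ht
    rcases eq_or_lt_of_le ht with h | h
    · rw [← h]; exact hφ00
    · exact (hφlt t h).le
  -- contraction property of S
  have hcon : ∀ x y : X, ‖S x - S y‖ ≤ φ ‖x - y‖ := by
    intro x y
    have h1 : S x - S y = lam • (b • (x - y) + T x - T y) := by
      simp only [hS]
      rw [← hkey]
      module
    rw [h1, norm_smul, Real.norm_of_nonneg hlam0.le]
    calc lam * ‖b • (x - y) + T x - T y‖ ≤ lam * ((b + 1) * φ ‖x - y‖) := by
          exact mul_le_mul_of_nonneg_left (hT x y) hlam0.le
      _ = φ ‖x - y‖ := by rw [← mul_assoc, hlamb, one_mul]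
  -- the Picard iterates of S
  set y : ℕ → X := fun n => S^[n] 0 with hy
  have hystep : ∀ n, y (n + 1) = S (y n) := by
    intro n; simp only [hy, Function.iterate_succ_apply']
  set d : ℕ → ℝ := fun n => ‖y (n + 1) - y n‖ with hd
  have hdbound : ∀ n, d n ≤ φ^[n] (d 0) := by
    intro n
    induction n with
    | zero => simp
    | succ n ih =>
      have : d (n + 1) ≤ φ (d n) := by
        simp only [hd, hystep]
        exact hcon _ _
      rw [Function.iterate_succ_apply']
      exact this.trans (hφmono _ _ (norm_nonneg _) ih)
  have hdzero : Filter.Tendsto d Filter.atTop (nhds 0) := by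
    refine squeeze_zero (fun n => norm_nonneg _) hdbound (hφiter _ (norm_nonneg _))
  have hycauchy : CauchySeq y := by
    rw [Metric.cauchySeq_iff']
    intro ε hε
    have hφε : φ ε < ε := hφlt ε hε
    have : ∀ᶠ n in Filter.atTop, d n < ε - φ ε := by
      refine (hdzero.eventually (eventually_lt_nhds (by linarith : (0:ℝ) < ε - φ ε)))
    obtain ⟨N, hN⟩ := this.exists
    refine ⟨N, fun m hm => ?_⟩
    rw [dist_eq_norm]
    induction m, hm using Nat.le_induction with
    | base => simpa using hε
    | succ m hm ih =>
      have h1 : ‖y (m + 1) - y N‖ ≤ ‖y (m + 1) - y (N + 1)‖ + ‖y (N + 1) - y N‖ :=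
        norm_sub_le_norm_sub_add_norm_sub _ _ _
      have h2 : ‖y (m + 1) - y (N + 1)‖ ≤ φ ‖y m - y N‖ := by
        rw [hystep, hystep]; exact hcon _ _
      have h3 : φ ‖y m - y N‖ ≤ φ ε := hφmono _ _ (norm_nonneg _) ih.le
      calc ‖y (m + 1) - y N‖ ≤ φ ‖y m - y N‖ + d N := h1.trans (by gcongr)
        _ ≤ φ ε + d N := by linarith
        _ < φ ε + (ε - φ ε) := by linarith
        _ = ε := by ring
  obtain ⟨p, hp⟩ := cauchySeq_tendsto_of_complete hycauchy
  -- S is continuous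
  have hScont : Continuous S := by
    refine (LipschitzWith.of_dist_le_mul (K := 1) fun a c => ?_).continuous
    rw [dist_eq_norm, dist_eq_norm, NNReal.coe_one, one_mul]
    exact (hcon a c).trans (hφle _ (norm_nonneg _))
  have hSp : S p = p := by
    have h1 : Filter.Tendsto (fun n => y (n + 1)) Filter.atTop (nhds p) :=
      hp.comp (Filter.tendsto_add_atTop_nat 1)
    have h2 : Filter.Tendsto (fun n => S (y n)) Filter.atTop (nhds (S p)) :=
      (hScont.tendsto p).comp hp
    have h3 : (fun n => y (n + 1)) = fun n => S (y n) := funext hystep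
    rw [h3] at h1
    exact tendsto_nhds_unique h2 h1
  have hTp : T p = p := by
    have h3 : lam • (T p - p) = S p - p := by simp only [hS]; module
    rw [hSp, sub_self] at h3
    rcases smul_eq_zero.mp h3 with h | h
    · exact absurd h hlam0.ne'
    · exact sub_eq_zero.mp h
  -- convergence of the iteration
  have hSfix : ∀ z : X, S z = z → z = p := by
    intro z hz
    by_contra hne
    have h0 : 0 < ‖z - p‖ := by
      rw [norm_pos_iff, sub_ne_zero]; exact hne
    have := hcon z p
    rw [hz, hSp] at this
    exact absurd this (not_le.mpr (hφlt _ h0))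
  refine ⟨p, hTp, ?_, lam, ⟨hlam0, hlam1⟩, ?_⟩
  · intro q hq
    refine hSfix q ?_
    simp only [hS, hq]
    module
  · intro x hx
    have hxS : ∀ n, x (n + 1) = S (x n) := fun n => hx n
    have hbound : ∀ n, ‖x n - p‖ ≤ φ^[n] ‖x 0 - p‖ := by
      intro n
      induction n with
      | zero => simp
      | succ n ih =>
        have h1 : ‖x (n + 1) - p‖ ≤ φ ‖x n - p‖ := by
          rw [hxS n]
          calc ‖S (x n) - p‖ = ‖S (x n) - S p‖ := by rw [hSp]
            _ ≤ φ ‖x n - p‖ := hcon _ _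
        rw [Function.iterate_succ_apply']
        exact h1.trans (hφmono _ _ (norm_nonneg _) ih)
    rw [tendsto_iff_norm_sub_tendsto_zero]
    exact squeeze_zero (fun n => norm_nonneg _) hbound (hφiter _ (norm_nonneg _))
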